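/- Let u be a real number with 0 ≤ u, let n be a natural number with n·u < 1, let δ_1, …, δ_n be real numbers with |δ_i| ≤ u for every i, and let ρ_1, …, ρ_n ∈ {−1, +1}. Then there exists a real number θ with |θ| ≤ n·u/(1 − n·u) such that ∏_{i=1}^n (1 + δ_i)^{ρ_i} = 1 + θ. -/

import Mathlib

/-- Higham's accumulation lemma (Lemma 3.1): a product of factors
`(1 + δᵢ)^{ρᵢ}` with `|δᵢ| ≤ u`, `ρᵢ = ±1`, and `n·u < 1` equals `1 + θ`
with `|θ| ≤ γₙ := n·u/(1 − n·u)`. -/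
theorem higham_accumulation (u : ℝ) (hu : 0 ≤ u) (n : ℕ) (hnu : (n : ℝ) * u < 1)
    (δ : Fin n → ℝ) (hδ : ∀ i, |δ i| ≤ u)
    (ρ : Fin n → ℤ) (hρ : ∀ i, ρ i = 1 ∨ ρ i = -1) :
    ∃ θ : ℝ, |θ| ≤ (n : ℝ) * u / (1 - (n : ℝ) * u) ∧
      ∏ i, (1 + δ i) ^ (ρ i) = 1 + θ := by
  rcases Nat.eq_zero_or_pos n with hn | hn
  · subst hn
    exact ⟨0, by simp, by simp⟩
  have hu1 : u < 1 := by
    have h1 : (1 : ℝ) ≤ (n : ℝ) := by exact_mod_cast hn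
    nlinarith
  have h1u : (0 : ℝ) < 1 - u := by linarith
  have hnu0 : (0 : ℝ) ≤ (n : ℝ) * u := by positivity
  have hnupos : (0 : ℝ) < 1 - (n : ℝ) * u := by linarith
  -- each factor is in [1-u, (1-u)⁻¹]
  have hfac : ∀ i, 1 - u ≤ (1 + δ i) ^ (ρ i) ∧ (1 + δ i) ^ (ρ i) ≤ (1 - u)⁻¹ := by
    intro i
    have habs := abs_le.mp (hδ i)
    have hpos : (0 : ℝ) < 1 + δ i := by linarith [habs.1]
    rcases hρ i with h | h
    · rw [h]
      simp only [zpow_one]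
      constructor
      · linarith [habs.1]
      · rw [← one_div, le_div_iff₀ h1u]
        nlinarith [habs.2]
    · rw [h]
      simp only [zpow_neg, zpow_one]
      constructor
      · rw [← one_div, le_div_iff₀ hpos]
        nlinarith [habs.2]
      · apply inv_anti₀ h1u
        linarith [habs.1]
  -- product bounds
  set P := ∏ i, (1 + δ i) ^ (ρ i) with hP
  have hconst : ∀ c : ℝ, (∏ _i : Fin n, c) = c ^ n := by
    intro c; simp
  have hlow : (1 - u) ^ n ≤ P := by
    rw [hP, ← hconst]
    refine Finset.prod_le_prod (fun i _ => le_of_lt h1u) (fun i _ => (hfac i).1)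
  have hhigh : P ≤ ((1 - u) ^ n)⁻¹ := by
    rw [← inv_pow, hP, ← hconst]
    refine Finset.prod_le_prod ?_ (fun i _ => (hfac i).2)
    intro i _
    have := (hfac i).1
    linarith
  -- Bernoulli
  have hbern : 1 - (n : ℝ) * u ≤ (1 - u) ^ n := by
    have := one_add_mul_le_pow (a := -u) (by linarith) n
    calc 1 - (n : ℝ) * u = 1 + (n : ℝ) * (-u) := by ring
    _ ≤ (1 + (-u)) ^ n := this
    _ = (1 - u) ^ n := by ring_nf
  have hpownpos : (0 : ℝ) < (1 - u) ^ n := by positivity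
  refine ⟨P - 1, ?_, by ring⟩
  rw [abs_le]
  constructor
  · have h1 : (n : ℝ) * u ≤ (n : ℝ) * u / (1 - (n : ℝ) * u) := by
      rw [le_div_iff₀ hnupos]
      nlinarith
    nlinarith
  · have h2 : P - 1 ≤ (1 - (n : ℝ) * u)⁻¹ - 1 := by
      have : ((1 - u) ^ n)⁻¹ ≤ (1 - (n : ℝ) * u)⁻¹ :=
        inv_anti₀ hnupos hbern
      linarith
    have h3 : (1 - (n : ℝ) * u)⁻¹ - 1 = (n : ℝ) * u / (1 - (n : ℝ) * u) := by
      field_simp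
      ring
    linarith
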